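/- Let P and Q be Borel probability measures on a finite product X = ∏_{i=1}^n X_i of separable complete metric spaces, where Q has product form Q = ∏_{i=1}^n Q_i. For S ⊂ {1,…,n}, let P_S and Q_S denote the marginal distributions of P and Q on X_S = ∏_{i∈S} X_i (the pushforwards under the coordinate projection π_S). Then for any collection 𝒞 of distinct subsets of {1,…,n}, with r := max_{i∈[n]} #{S ∈ 𝒞 : i ∈ S}, one has Σ_{S∈𝒞} D(P_S ‖ Q_S) ≤ r · D(P ‖ Q). -/

import Mathlib

open MeasureTheory ProbabilityTheory ENNReal

open scoped Classical in
/-- The relative entropy (Kullback–Leibler divergence) `D(P‖Q) = ∫ log (dP/dQ) dP`,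
with value `+∞` when `P` is not absolutely continuous w.r.t. `Q` or the integral diverges. -/
noncomputable def relEntropy {α : Type*} [MeasurableSpace α] (P Q : Measure α) : ℝ≥0∞ :=
  if P ≪ Q ∧ Integrable (llr P Q) P then ENNReal.ofReal (∫ x, llr P Q x ∂P) else ⊤

section ShearerAux
open Finset Real


private lemma log_clamp {t M : ℝ} (ht : 0 < t) (hM : 0 < M) :
    Real.log (max (min t M) M⁻¹) = max (min (Real.log t) (Real.log M)) (- Real.log M) := by
  have h1 : Real.log (min t M) = min (Real.log t) (Real.log M) := by
    rcases le_total t M with h | h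
    · rw [min_eq_left h, min_eq_left (Real.log_le_log ht h)]
    · rw [min_eq_right h, min_eq_right (Real.log_le_log hM h)]
  have hmin : 0 < min t M := lt_min ht hM
  rcases le_total M⁻¹ (min t M) with h | h
  · rw [max_eq_left h, h1]
    rw [max_eq_left]
    rw [← h1, ← Real.log_inv]
    exact Real.log_le_log (by positivity) h
  · rw [max_eq_right h, Real.log_inv, max_eq_right]
    rw [← Real.log_inv, ← h1]
    exact Real.log_le_log hmin h
private lemma tr_abs_le {y L : ℝ} (hL : 0 ≤ L) : |max (min y L) (-L)| ≤ |y| := by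
  rcases le_total 0 y with hy | hy
  · have h1 : max (min y L) (-L) = min y L := max_eq_left ((neg_nonpos.2 hL).trans (le_min hy hL))
    rw [h1, abs_of_nonneg (le_min hy hL), abs_of_nonneg hy]
    exact min_le_left _ _
  · have h1 : min y L = y := min_eq_left (hy.trans hL)
    rw [h1, abs_of_nonpos (max_le hy (neg_nonpos.2 hL)), abs_of_nonpos hy]
    rcases le_total y (-L) with h | h
    · rw [max_eq_right h]; linarith
    · rw [max_eq_left h]
private lemma tr_ge {y L : ℝ} (hL : 0 ≤ L) : - max (-y) 0 ≤ max (min y L) (-L) := by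
  rcases le_total 0 y with hy | hy
  · calc - max (-y) 0 = 0 := by rw [max_eq_right (neg_nonpos.2 hy)]; ring
      _ ≤ max (min y L) (-L) := le_max_of_le_left (le_min hy hL)
  · calc - max (-y) 0 = y := by rw [max_eq_left (neg_nonneg.2 hy)]; ring
      _ = min y L := (min_eq_left (hy.trans hL)).symm
      _ ≤ _ := le_max_left _ _
private lemma tr_pos_le {y L : ℝ} (hL : 0 ≤ L) :
    min (max y 0) L ≤ max (min y L) (-L) + max (-y) 0 := by
  rcases le_total 0 y with hy | hy
  · rw [max_eq_left hy, max_eq_right (neg_nonpos.2 hy), add_zero]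
    exact le_max_of_le_left (le_refl _)
  · rw [max_eq_right hy, max_eq_left (neg_nonneg.2 hy), min_eq_left hL]
    rw [min_eq_left (hy.trans hL)]
    rcases le_total y (-L) with h | h
    · rw [max_eq_right h]; linarith
    · rw [max_eq_left h]; linarith
private lemma tr_eq_of {y L : ℝ} (h : |y| ≤ L) : max (min y L) (-L) = y := by
  rw [abs_le] at h
  rw [min_eq_left h.2, max_eq_left h.1]
private lemma pos_sub_neg (y : ℝ) : max y 0 - max (-y) 0 = y := by
  rcases le_total 0 y with hy | hy
  · rw [max_eq_left hy, max_eq_right (neg_nonpos.2 hy)]; ring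
  · rw [max_eq_right hy, max_eq_left (neg_nonneg.2 hy)]; ring
private lemma abs_eq_pos_add_neg (y : ℝ) : |y| = max y 0 + max (-y) 0 := by
  rcases le_total 0 y with hy | hy
  · rw [abs_of_nonneg hy, max_eq_left hy, max_eq_right (neg_nonpos.2 hy)]; ring
  · rw [abs_of_nonpos hy, max_eq_right hy, max_eq_left (neg_nonneg.2 hy)]; ring

private lemma rn_facts {α : Type*} [MeasurableSpace α] (μ ν : Measure α)
    [SigmaFinite μ] [SigmaFinite ν] (hac : μ ≪ ν) :
    ∀ᵐ x ∂μ, 0 < μ.rnDeriv ν x ∧ μ.rnDeriv ν x < ⊤ :=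
  (Measure.rnDeriv_pos hac).and (hac.ae_le (Measure.rnDeriv_lt_top μ ν))

private lemma llr_negpart {α : Type*} [MeasurableSpace α] (μ ν : Measure α)
    [IsProbabilityMeasure μ] [IsProbabilityMeasure ν] (hac : μ ≪ ν) :
    Integrable (fun x => max (- llr μ ν x) 0) μ ∧ ∫ x, max (- llr μ ν x) 0 ∂μ ≤ 1 := by
  have hmeas : Measurable (fun x => max (- llr μ ν x) 0) :=
    (measurable_llr μ ν).neg.max measurable_const
  have hkey : ∀ᵐ x ∂μ, ENNReal.ofReal (max (- llr μ ν x) 0) ≤ (μ.rnDeriv ν x)⁻¹ := by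
    filter_upwards [rn_facts μ ν hac] with x ⟨h0, htop⟩
    have ht : 0 < (μ.rnDeriv ν x).toReal := ENNReal.toReal_pos h0.ne' htop.ne
    have h1 : - llr μ ν x ≤ ((μ.rnDeriv ν x).toReal)⁻¹ := by
      rw [llr, ← Real.log_inv]
      have := Real.log_le_sub_one_of_pos (inv_pos.2 ht)
      linarith
    have h2 : max (- llr μ ν x) 0 ≤ ((μ.rnDeriv ν x).toReal)⁻¹ :=
      max_le h1 (by positivity)
    calc ENNReal.ofReal (max (- llr μ ν x) 0) ≤ ENNReal.ofReal ((μ.rnDeriv ν x).toReal)⁻¹ :=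
          ENNReal.ofReal_le_ofReal h2
      _ = (μ.rnDeriv ν x)⁻¹ := by
          rw [← ENNReal.toReal_inv, ENNReal.ofReal_toReal (by simp [h0.ne'])]
  have hlin : ∫⁻ x, ENNReal.ofReal (max (- llr μ ν x) 0) ∂μ ≤ 1 := by
    calc ∫⁻ x, ENNReal.ofReal (max (- llr μ ν x) 0) ∂μ ≤ ∫⁻ x, (μ.rnDeriv ν x)⁻¹ ∂μ :=
          lintegral_mono_ae hkey
      _ = ∫⁻ x, μ.rnDeriv ν x * (μ.rnDeriv ν x)⁻¹ ∂ν :=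
          (lintegral_rnDeriv_mul hac (Measure.measurable_rnDeriv μ ν).inv.aemeasurable).symm
      _ ≤ ∫⁻ _, 1 ∂ν := lintegral_mono fun x => ENNReal.mul_inv_le_one _
      _ = 1 := by simp
  have hnn : (0 : α → ℝ) ≤ᵐ[μ] (fun x => max (- llr μ ν x) 0) :=
    ae_of_all _ fun x => le_max_right _ _
  have hint : Integrable (fun x => max (- llr μ ν x) 0) μ := by
    refine ⟨hmeas.aestronglyMeasurable, ?_⟩
    rw [hasFiniteIntegral_iff_ofReal hnn]
    exact hlin.trans_lt ENNReal.one_lt_top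
  refine ⟨hint, ?_⟩
  rw [integral_eq_lintegral_of_nonneg_ae hnn hmeas.aestronglyMeasurable]
  calc (∫⁻ x, ENNReal.ofReal (max (- llr μ ν x) 0) ∂μ).toReal ≤ (1 : ℝ≥0∞).toReal :=
        ENNReal.toReal_mono ENNReal.one_ne_top hlin
    _ = 1 := by simp

private lemma gibbs_ineq {α : Type*} [MeasurableSpace α] (P Q : Measure α)
    [IsProbabilityMeasure P] [IsProbabilityMeasure Q] (hac : P ≪ Q)
    (hint : Integrable (llr P Q) P) {g : α → ℝ} (hgm : Measurable g) {C : ℝ}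
    (hg : ∀ x, |g x| ≤ C) :
    ∫ x, g x ∂P ≤ ∫ x, llr P Q x ∂P
      + ((∫⁻ x, ENNReal.ofReal (Real.exp (g x)) ∂Q).toReal - 1) := by
  set ρ := P.rnDeriv Q with hρ
  set h : α → ℝ := fun x => Real.exp (g x) * ((ρ x).toReal)⁻¹ with hh
  have hgi : Integrable g P :=
    Integrable.mono' (integrable_const C) hgm.aestronglyMeasurable (ae_of_all _ hg)
  set I := ∫⁻ x, ENNReal.ofReal (Real.exp (g x)) ∂Q with hI
  have hIle : I ≤ ENNReal.ofReal (Real.exp C) := by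
    calc I ≤ ∫⁻ _, ENNReal.ofReal (Real.exp C) ∂Q :=
          lintegral_mono fun x => ENNReal.ofReal_le_ofReal
            (Real.exp_le_exp.2 ((le_abs_self _).trans (hg x)))
      _ = ENNReal.ofReal (Real.exp C) := by simp
  have hItop : I ≠ ⊤ := (hIle.trans_lt ENNReal.ofReal_lt_top).ne
  have hmeash : Measurable h :=
    (Real.measurable_exp.comp hgm).mul ((Measure.measurable_rnDeriv P Q).ennreal_toReal.inv)
  have hhnn : ∀ x, 0 ≤ h x := fun x => by positivity
  have hIP : ∫⁻ x, ENNReal.ofReal (h x) ∂P ≤ I := by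
    have hcongr : ∀ᵐ x ∂P, ENNReal.ofReal (h x)
        = ENNReal.ofReal (Real.exp (g x)) * (ρ x)⁻¹ := by
      filter_upwards [rn_facts P Q hac] with x ⟨h0, htop⟩
      rw [hh, ENNReal.ofReal_mul (Real.exp_nonneg _), ← ENNReal.toReal_inv,
        ENNReal.ofReal_toReal (by simp [hρ, h0.ne'])]
    calc ∫⁻ x, ENNReal.ofReal (h x) ∂P
        = ∫⁻ x, ENNReal.ofReal (Real.exp (g x)) * (ρ x)⁻¹ ∂P := lintegral_congr_ae hcongr
      _ = ∫⁻ x, ρ x * (ENNReal.ofReal (Real.exp (g x)) * (ρ x)⁻¹) ∂Q :=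
          (lintegral_rnDeriv_mul hac
            (((measurable_ofReal.comp (Real.measurable_exp.comp hgm)).mul
              (Measure.measurable_rnDeriv P Q).inv)).aemeasurable).symm
      _ ≤ ∫⁻ x, ENNReal.ofReal (Real.exp (g x)) ∂Q := by
          refine lintegral_mono fun x => ?_
          calc ρ x * (ENNReal.ofReal (Real.exp (g x)) * (ρ x)⁻¹)
              = ENNReal.ofReal (Real.exp (g x)) * (ρ x * (ρ x)⁻¹) := by ring
            _ ≤ ENNReal.ofReal (Real.exp (g x)) * 1 :=
                mul_le_mul_right (ENNReal.mul_inv_le_one _) _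
            _ = _ := mul_one _
  have hinth : Integrable h P := by
    refine ⟨hmeash.aestronglyMeasurable, ?_⟩
    rw [hasFiniteIntegral_iff_ofReal (ae_of_all _ hhnn)]
    exact lt_of_le_of_lt hIP hItop.lt_top
  have hptwise : ∀ᵐ x ∂P, g x - llr P Q x ≤ h x - 1 := by
    filter_upwards [rn_facts P Q hac] with x ⟨h0, htop⟩
    have ht : 0 < (ρ x).toReal := ENNReal.toReal_pos h0.ne' htop.ne
    have : g x - llr P Q x = Real.log (h x) := by
      rw [llr, hh, Real.log_mul (Real.exp_ne_zero _) (by positivity), Real.log_exp,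
        Real.log_inv]
      ring
    rw [this]
    have hhx : 0 < h x := by positivity
    linarith [Real.log_le_sub_one_of_pos hhx]
  have step : ∫ x, (g x - llr P Q x) ∂P ≤ ∫ x, (h x - 1) ∂P :=
    integral_mono_ae (hgi.sub hint) (hinth.sub (integrable_const 1)) hptwise
  rw [integral_sub hgi hint, integral_sub hinth (integrable_const 1)] at step
  have hInt1 : ∫ (_ : α), (1 : ℝ) ∂P = 1 := by simp
  have hhval : ∫ x, h x ∂P ≤ I.toReal := by
    rw [integral_eq_lintegral_of_nonneg_ae (ae_of_all _ hhnn) hmeash.aestronglyMeasurable]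
    exact ENNReal.toReal_mono hItop hIP
  rw [hInt1] at step
  linarith

private lemma integral_llr_nonneg' {α : Type*} [MeasurableSpace α] (μ ν : Measure α)
    [IsProbabilityMeasure μ] [IsProbabilityMeasure ν] (hac : μ ≪ ν)
    (hint : Integrable (llr μ ν) μ) : 0 ≤ ∫ x, llr μ ν x ∂μ := by
  have := gibbs_ineq μ ν hac hint (g := fun _ => 0) measurable_const (C := 0)
    (fun x => by simp)
  simpa using this

private lemma finner_marginal {n : ℕ} {X : Fin n → Type*} [∀ i, MeasurableSpace (X i)]
    (Q : ∀ i, Measure (X i)) [∀ i, IsProbabilityMeasure (Q i)]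
    (𝒞 : Finset (Finset (Fin n))) {r : ℕ} (hr0 : 0 < r)
    (hr : ∀ i : Fin n, (𝒞.filter fun S => i ∈ S).card ≤ r)
    (T : Finset (Fin n)) :
    ∀ (F : Finset (Fin n) → (∀ i, X i) → ℝ≥0∞),
      (∀ S, Measurable (F S)) →
      (∀ S ∈ 𝒞, ∀ (x y : ∀ i, X i), (∀ i ∈ S, x i = y i) → F S x = F S y) →
      ∀ x, (∫⋯∫⁻_T, (fun z => ∏ S ∈ 𝒞, F S z ^ (r : ℝ)⁻¹) ∂Q) x ≤
        ∏ S ∈ 𝒞, ((∫⋯∫⁻_T, F S ∂Q) x) ^ (r : ℝ)⁻¹ := by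
  classical
  induction T using Finset.induction_on with
  | empty =>
    intro F hFm hFdep x
    simp
  | @insert j T hj IH =>
    intro F hFm hFdep x
    -- measurability of the big product
    have hprodm : Measurable (fun z => ∏ S ∈ 𝒞, F S z ^ (r : ℝ)⁻¹) :=
      Finset.measurable_prod _ (fun S _ => (hFm S).pow_const _)
    -- the modified family
    set F' : Finset (Fin n) → (∀ i, X i) → ℝ≥0∞ := fun S =>
      if j ∈ S then (fun z => ∫⁻ y, F S (Function.update z j y) ∂Q j) else F S with hF'
    have hF'm : ∀ S, Measurable (F' S) := by
      intro S
      by_cases h : j ∈ S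
      · have := Measurable.lmarginal Q (hFm S) (s := {j})
        rw [lmarginal_singleton] at this
        simpa [hF', h] using this
      · simpa [hF', h] using hFm S
    have hF'dep : ∀ S ∈ 𝒞, ∀ (x y : ∀ i, X i), (∀ i ∈ S, x i = y i) → F' S x = F' S y := by
      intro S hS x y hxy
      by_cases h : j ∈ S
      · simp only [hF', if_pos h]
        refine lintegral_congr fun c => hFdep S hS _ _ fun i hi => ?_
        by_cases hij : i = j
        · subst hij; simp
        · simp [Function.update_of_ne hij, hxy i hi]
      · simpa [hF', h] using hFdep S hS x y hxy
    -- key pointwise Hölder bound for the innermost integral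
    have key : (fun z => ∫⁻ y, (fun w => ∏ S ∈ 𝒞, F S w ^ (r : ℝ)⁻¹)
          (Function.update z j y) ∂Q j) ≤ fun z => ∏ S ∈ 𝒞, F' S z ^ (r : ℝ)⁻¹ := by
      intro z
      have split : ∀ w : ∀ i, X i, ∏ S ∈ 𝒞, F S w ^ (r : ℝ)⁻¹ =
          (∏ S ∈ 𝒞.filter (fun S => j ∈ S), F S w ^ (r : ℝ)⁻¹) *
          ∏ S ∈ 𝒞.filter (fun S => ¬ j ∈ S), F S w ^ (r : ℝ)⁻¹ := fun w =>
        (Finset.prod_filter_mul_prod_filter_not 𝒞 _ _).symm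
    -- constants (S with j ∉ S) pull out
      have hconst : ∀ S ∈ 𝒞.filter (fun S => ¬ j ∈ S), ∀ y,
          F S (Function.update z j y) = F S z := by
        intro S hS y
        rw [Finset.mem_filter] at hS
        refine hFdep S hS.1 _ _ fun i hi => ?_
        have : i ≠ j := fun h => hS.2 (h ▸ hi)
        simp [Function.update_of_ne this]
      calc ∫⁻ y, (fun w => ∏ S ∈ 𝒞, F S w ^ (r : ℝ)⁻¹) (Function.update z j y) ∂Q j
          = ∫⁻ y, (∏ S ∈ 𝒞.filter (fun S => j ∈ S),
              F S (Function.update z j y) ^ (r : ℝ)⁻¹) *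
              (∏ S ∈ 𝒞.filter (fun S => ¬ j ∈ S), F S z ^ (r : ℝ)⁻¹) ∂Q j := by
            refine lintegral_congr fun y => ?_
            show ∏ S ∈ 𝒞, F S (Function.update z j y) ^ (r : ℝ)⁻¹ = _
            rw [split]
            congr 1
            exact Finset.prod_congr rfl fun S hS => by rw [hconst S hS y]
        _ = (∫⁻ y, ∏ S ∈ 𝒞.filter (fun S => j ∈ S),
              F S (Function.update z j y) ^ (r : ℝ)⁻¹ ∂Q j) *
              (∏ S ∈ 𝒞.filter (fun S => ¬ j ∈ S), F S z ^ (r : ℝ)⁻¹) := by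
            exact lintegral_mul_const _ (Finset.measurable_prod _ fun S _ =>
              ((hFm S).comp (measurable_update z)).pow_const _)
        _ ≤ (∏ S ∈ 𝒞.filter (fun S => j ∈ S), F' S z ^ (r : ℝ)⁻¹) *
              (∏ S ∈ 𝒞.filter (fun S => ¬ j ∈ S), F S z ^ (r : ℝ)⁻¹) := by
            refine mul_le_mul_left ?_ _
            have hcard : ((𝒞.filter (fun S => j ∈ S)).card : ℝ) * (r : ℝ)⁻¹ ≤ 1 := by
              rw [← div_eq_mul_inv, div_le_one (by positivity)]
              exact_mod_cast hr j
            have holder := ENNReal.lintegral_mul_prod_norm_pow_le (μ := Q j)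
              (𝒞.filter (fun S => j ∈ S)) (g := fun _ => (1 : ℝ≥0∞))
              (f := fun S y => F S (Function.update z j y))
              aemeasurable_const
              (fun S _ => ((hFm S).comp (measurable_update z)).aemeasurable)
              (1 - ((𝒞.filter (fun S => j ∈ S)).card : ℝ) * (r : ℝ)⁻¹)
              (p := fun _ => (r : ℝ)⁻¹)
              (by rw [Finset.sum_const, nsmul_eq_mul]; ring)
              (by linarith)
              (fun S _ => by positivity)
            simp only [ENNReal.one_rpow, one_mul, lintegral_one, measure_univ] at holder
            refine holder.trans_eq ?_
            refine Finset.prod_congr rfl fun S hS => ?_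
            rw [Finset.mem_filter] at hS
            simp [hF', hS.2]
        _ = ∏ S ∈ 𝒞, F' S z ^ (r : ℝ)⁻¹ := by
            rw [← Finset.prod_filter_mul_prod_filter_not 𝒞 (fun S => j ∈ S)]
            congr 1
            refine Finset.prod_congr rfl fun S hS => ?_
            rw [Finset.mem_filter] at hS
            simp [hF', hS.2]
    calc (∫⋯∫⁻_insert j T, (fun z => ∏ S ∈ 𝒞, F S z ^ (r : ℝ)⁻¹) ∂Q) x
        = (∫⋯∫⁻_T, (fun z => ∫⁻ y, (fun w => ∏ S ∈ 𝒞, F S w ^ (r : ℝ)⁻¹)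
            (Function.update z j y) ∂Q j) ∂Q) x := by
          rw [lmarginal_insert' _ hprodm hj]
      _ ≤ (∫⋯∫⁻_T, (fun z => ∏ S ∈ 𝒞, F' S z ^ (r : ℝ)⁻¹) ∂Q) x :=
          lmarginal_mono key x
      _ ≤ ∏ S ∈ 𝒞, ((∫⋯∫⁻_T, F' S ∂Q) x) ^ (r : ℝ)⁻¹ := IH F' hF'm hF'dep x
      _ = ∏ S ∈ 𝒞, ((∫⋯∫⁻_insert j T, F S ∂Q) x) ^ (r : ℝ)⁻¹ := by
          refine Finset.prod_congr rfl fun S hS => ?_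
          congr 1
          by_cases h : j ∈ S
          · rw [lmarginal_insert' _ (hFm S) hj]
            simp [hF', h]
          · rw [lmarginal_insert' _ (hFm S) hj]
            congr 1
            ext z
            have : ∀ y, F S (Function.update z j y) = F S z := by
              intro y
              refine hFdep S hS _ _ fun i hi => ?_
              have : i ≠ j := fun hh => h (hh ▸ hi)
              simp [Function.update_of_ne this]
            simp only [this, lintegral_const, measure_univ, mul_one]
            simp [hF', h]

private lemma finner_pi {n : ℕ} {X : Fin n → Type*} [∀ i, MeasurableSpace (X i)]
    (Q : ∀ i, Measure (X i)) [∀ i, IsProbabilityMeasure (Q i)]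
    (𝒞 : Finset (Finset (Fin n))) {r : ℕ} (hr0 : 0 < r)
    (hr : ∀ i : Fin n, (𝒞.filter fun S => i ∈ S).card ≤ r)
    (F : Finset (Fin n) → (∀ i, X i) → ℝ≥0∞) (hFm : ∀ S, Measurable (F S))
    (hFdep : ∀ S ∈ 𝒞, ∀ x y, (∀ i ∈ S, x i = y i) → F S x = F S y) :
    ∫⁻ x, ∏ S ∈ 𝒞, F S x ^ (r : ℝ)⁻¹ ∂(Measure.pi Q) ≤
      ∏ S ∈ 𝒞, (∫⁻ x, F S x ∂(Measure.pi Q)) ^ (r : ℝ)⁻¹ := by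
  classical
  haveI : ∀ i, Nonempty (X i) := by
    intro i
    by_contra h
    rw [not_nonempty_iff] at h
    have h1 := measure_univ (μ := Q i)
    rw [Set.univ_eq_empty_iff.2 h, measure_empty] at h1
    exact zero_ne_one h1
  obtain ⟨x0⟩ : Nonempty (∀ i, X i) := ⟨fun i => Classical.arbitrary _⟩
  have h := finner_marginal Q 𝒞 hr0 hr Finset.univ F hFm hFdep x0
  rw [lmarginal_univ] at h
  refine le_trans (le_of_eq ?_) (h.trans (le_of_eq (Finset.prod_congr rfl fun S _ => ?_)))
  · rw [lintegral_eq_lmarginal_univ x0]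
  · rw [lmarginal_univ]

private lemma shearer_key {n : ℕ} {X : Fin n → Type*} [∀ i, MeasurableSpace (X i)]
    (P : Measure (∀ i, X i)) [IsProbabilityMeasure P]
    (Q : ∀ i, Measure (X i)) [∀ i, IsProbabilityMeasure (Q i)]
    (𝒞 : Finset (Finset (Fin n))) {r : ℕ} (hr0 : 0 < r)
    (hrcov : ∀ i : Fin n, (𝒞.filter fun S => i ∈ S).card ≤ r)
    (hac : P ≪ Measure.pi Q) (hint : Integrable (llr P (Measure.pi Q)) P)
    (m : ℕ) (hm : 2 ≤ m) :
    ∑ S ∈ 𝒞, ∫ z, max (min (llr (P.map fun x (i : S) => x i.1)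
        ((Measure.pi Q).map fun x (i : S) => x i.1) z) (Real.log m)) (- Real.log m)
        ∂(P.map fun x (i : S) => x i.1) ≤
      r * (∫ x, llr P (Measure.pi Q) x ∂P) + r * ((1 + (m : ℝ)⁻¹) ^ 𝒞.card - 1) := by
  classical
  have hπ : ∀ S : Finset (Fin n),
      Measurable (fun (x : ∀ i, X i) (i : S) => x i.1) := fun S =>
    measurable_pi_lambda _ fun i => measurable_pi_apply i.1
  have hPSprob : ∀ S : Finset (Fin n),
      IsProbabilityMeasure (P.map fun x (i : S) => x i.1) :=
    fun S => Measure.isProbabilityMeasure_map (hπ S).aemeasurable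
  have hQSprob : ∀ S : Finset (Fin n),
      IsProbabilityMeasure ((Measure.pi Q).map fun x (i : S) => x i.1) :=
    fun S => Measure.isProbabilityMeasure_map (hπ S).aemeasurable
  have hacS : ∀ S : Finset (Fin n),
      (P.map fun x (i : S) => x i.1) ≪ ((Measure.pi Q).map fun x (i : S) => x i.1) :=
    fun S => hac.map (hπ S)
  have hm0 : (0 : ℝ) < m := by positivity
  have hm1 : (1 : ℝ) ≤ m := by exact_mod_cast Nat.one_le_of_lt hm
  have hmE0 : (m : ℝ≥0∞) ≠ 0 := by exact_mod_cast (by positivity : (0:ℝ≥0∞) < m).ne'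
  have hmET : (m : ℝ≥0∞) ≠ ⊤ := ENNReal.natCast_ne_top m
  have hmE1 : (1 : ℝ≥0∞) ≤ (m : ℝ≥0∞) := by exact_mod_cast Nat.one_le_of_lt hm
  have hinv_le : ((m : ℝ≥0∞))⁻¹ ≤ (m : ℝ≥0∞) :=
    le_trans (ENNReal.inv_le_one.2 hmE1) hmE1
  -- the clamped densities
  set ρ : ∀ S : Finset (Fin n), (∀ i : S, X i.1) → ℝ≥0∞ := fun S =>
    (P.map fun x (i : S) => x i.1).rnDeriv ((Measure.pi Q).map fun x (i : S) => x i.1) with hρ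
  set u : ∀ S : Finset (Fin n), (∀ i : S, X i.1) → ℝ≥0∞ := fun S z =>
    (ρ S z ⊓ (m : ℝ≥0∞)) ⊔ ((m : ℝ≥0∞))⁻¹ with hu
  have hu_meas : ∀ S, Measurable (u S) := fun S =>
    ((Measure.measurable_rnDeriv _ _).min measurable_const).max measurable_const
  have hu_lb : ∀ S z, ((m : ℝ≥0∞))⁻¹ ≤ u S z := fun S z => le_sup_right
  have hu_ub : ∀ S z, u S z ≤ (m : ℝ≥0∞) := fun S z => sup_le inf_le_right hinv_le
  have hu_ne_top : ∀ S z, u S z ≠ ⊤ := fun S z => ((hu_ub S z).trans_lt hmET.lt_top).ne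
  have hu_ne_zero : ∀ S z, u S z ≠ 0 := fun S z =>
    (lt_of_lt_of_le (by simp [hmET] : (0:ℝ≥0∞) < ((m : ℝ≥0∞))⁻¹) (hu_lb S z)).ne'
  have ht_pos : ∀ S z, 0 < (u S z).toReal := fun S z =>
    ENNReal.toReal_pos (hu_ne_zero S z) (hu_ne_top S z)
  have ht_ub : ∀ S z, (u S z).toReal ≤ (m : ℝ) := fun S z => by
    have := ENNReal.toReal_mono hmET (hu_ub S z)
    simpa using this
  have ht_lb : ∀ S z, (m : ℝ)⁻¹ ≤ (u S z).toReal := fun S z => by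
    have := ENNReal.toReal_mono (hu_ne_top S z) (hu_lb S z)
    simpa [ENNReal.toReal_inv] using this
  have hlog_le : ∀ S z, |Real.log (u S z).toReal| ≤ Real.log m := by
    intro S z
    rw [abs_le]
    constructor
    · calc -Real.log m = Real.log ((m:ℝ))⁻¹ := by rw [Real.log_inv]
        _ ≤ _ := Real.log_le_log (by positivity) (ht_lb S z)
    · exact Real.log_le_log (ht_pos S z) (ht_ub S z)
  -- the tilt function
  set g : (∀ i, X i) → ℝ := fun x =>
    ∑ S ∈ 𝒞, (r : ℝ)⁻¹ * Real.log ((u S (fun i : S => x i.1)).toReal) with hg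
  have hgm : Measurable g :=
    Finset.measurable_sum 𝒞 fun S _ => measurable_const.mul
      (Real.measurable_log.comp ((hu_meas S).ennreal_toReal.comp (hπ S)))
  have hrinv1 : (r : ℝ)⁻¹ ≤ 1 := by
    rw [inv_le_one_iff₀]
    right
    exact_mod_cast hr0
  have hrinv0 : (0:ℝ) < (r : ℝ)⁻¹ := by positivity
  have hgb : ∀ x, |g x| ≤ (𝒞.card : ℝ) * Real.log m := by
    intro x
    calc |g x| ≤ ∑ S ∈ 𝒞, |(r : ℝ)⁻¹ * Real.log ((u S (fun i : S => x i.1)).toReal)| :=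
          Finset.abs_sum_le_sum_abs _ _
      _ ≤ ∑ S ∈ 𝒞, Real.log m := by
          refine Finset.sum_le_sum fun S _ => ?_
          rw [abs_mul, abs_of_nonneg hrinv0.le]
          calc (r : ℝ)⁻¹ * |Real.log ((u S (fun i : S => x i.1)).toReal)|
              ≤ 1 * Real.log m :=
                mul_le_mul hrinv1 (hlog_le S _) (abs_nonneg _) zero_le_one
            _ = Real.log m := one_mul _
      _ = (𝒞.card : ℝ) * Real.log m := by rw [Finset.sum_const, nsmul_eq_mul]
  -- Gibbs inequality
  have hgibbs := gibbs_ineq P (Measure.pi Q) hac hint hgm hgb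
  -- identify the exponential integral
  have hexp : ∀ x, ENNReal.ofReal (Real.exp (g x)) =
      ∏ S ∈ 𝒞, (u S (fun i : S => x i.1)) ^ (r : ℝ)⁻¹ := by
    intro x
    rw [hg, Real.exp_sum, ENNReal.ofReal_prod_of_nonneg (fun S _ => (Real.exp_nonneg _))]
    refine Finset.prod_congr rfl fun S _ => ?_
    have h1 : Real.exp ((r : ℝ)⁻¹ * Real.log ((u S (fun i : S => x i.1)).toReal))
        = ((u S (fun i : S => x i.1)).toReal) ^ (r : ℝ)⁻¹ := by
      rw [Real.rpow_def_of_pos (ht_pos S _), mul_comm]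
    rw [h1, ← ENNReal.ofReal_rpow_of_pos (ht_pos S _),
      ENNReal.ofReal_toReal (hu_ne_top S _)]
  -- Finner bound on the exponential integral
  have hFdep : ∀ S ∈ 𝒞, ∀ (x y : ∀ i, X i), (∀ i ∈ S, x i = y i) →
      u S (fun i : S => x i.1) = u S (fun i : S => y i.1) := by
    intro S _ x y hxy
    congr 1
    exact funext fun i => hxy i.1 i.2
  have hQuant : ∀ S : Finset (Fin n),
      ∫⁻ z, u S z ∂((Measure.pi Q).map fun x (i : S) => x i.1) ≤ 1 + ((m : ℝ≥0∞))⁻¹ := by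
    intro S
    haveI := hPSprob S; haveI := hQSprob S
    calc ∫⁻ z, u S z ∂((Measure.pi Q).map fun x (i : S) => x i.1)
        ≤ ∫⁻ z, (ρ S z + ((m : ℝ≥0∞))⁻¹) ∂((Measure.pi Q).map fun x (i : S) => x i.1) := by
          refine lintegral_mono fun z => ?_
          exact sup_le (inf_le_left.trans le_self_add) (self_le_add_left _ _)
      _ = (P.map fun x (i : S) => x i.1) Set.univ + ((m : ℝ≥0∞))⁻¹ := by
          rw [lintegral_add_right _ measurable_const, Measure.lintegral_rnDeriv (hacS S)]
          simp
      _ = 1 + ((m : ℝ≥0∞))⁻¹ := by rw [measure_univ]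
  have hone_le : (1:ℝ≥0∞) ≤ 1 + ((m : ℝ≥0∞))⁻¹ := le_self_add
  have hfin_ne_top : (1 + ((m : ℝ≥0∞))⁻¹) ≠ ⊤ := by
    simp [ENNReal.add_ne_top, ENNReal.inv_ne_top, hmE0]
  have hAbound : ∫⁻ x, ENNReal.ofReal (Real.exp (g x)) ∂(Measure.pi Q)
      ≤ ENNReal.ofReal ((1 + (m : ℝ)⁻¹) ^ 𝒞.card) := by
    have hco : (1 : ℝ≥0∞) + ((m : ℝ≥0∞))⁻¹ = ENNReal.ofReal (1 + (m : ℝ)⁻¹) := by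
      rw [ENNReal.ofReal_add zero_le_one (by positivity), ENNReal.ofReal_one,
        ENNReal.ofReal_inv_of_pos hm0, ENNReal.ofReal_natCast]
    calc ∫⁻ x, ENNReal.ofReal (Real.exp (g x)) ∂(Measure.pi Q)
        = ∫⁻ x, ∏ S ∈ 𝒞, (u S (fun i : S => x i.1)) ^ (r : ℝ)⁻¹ ∂(Measure.pi Q) := by
          exact lintegral_congr fun x => hexp x
      _ ≤ ∏ S ∈ 𝒞, (∫⁻ x, u S (fun i : S => x i.1) ∂(Measure.pi Q)) ^ (r : ℝ)⁻¹ :=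
          finner_pi Q 𝒞 hr0 hrcov (fun S x => u S (fun i : S => x i.1))
            (fun S => (hu_meas S).comp (hπ S)) hFdep
      _ ≤ ∏ S ∈ 𝒞, (1 + ((m : ℝ≥0∞))⁻¹) ^ (r : ℝ)⁻¹ := by
          refine Finset.prod_le_prod' fun S _ => ?_
          refine ENNReal.rpow_le_rpow ?_ (by positivity)
          rw [← lintegral_map (hu_meas S) (hπ S)]
          exact hQuant S
      _ ≤ ∏ _S ∈ 𝒞, (1 + ((m : ℝ≥0∞))⁻¹) := by
          refine Finset.prod_le_prod' fun S _ => ?_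
          calc (1 + ((m : ℝ≥0∞))⁻¹) ^ (r : ℝ)⁻¹
              ≤ (1 + ((m : ℝ≥0∞))⁻¹) ^ (1:ℝ) :=
                ENNReal.rpow_le_rpow_of_exponent_le hone_le hrinv1
            _ = _ := ENNReal.rpow_one _
      _ = (1 + ((m : ℝ≥0∞))⁻¹) ^ 𝒞.card := by rw [Finset.prod_const]
      _ = ENNReal.ofReal ((1 + (m : ℝ)⁻¹) ^ 𝒞.card) := by
          rw [hco, ← ENNReal.ofReal_pow (by positivity)]
  have hAreal : (∫⁻ x, ENNReal.ofReal (Real.exp (g x)) ∂(Measure.pi Q)).toReal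
      ≤ (1 + (m : ℝ)⁻¹) ^ 𝒞.card := by
    calc (∫⁻ x, ENNReal.ofReal (Real.exp (g x)) ∂(Measure.pi Q)).toReal
        ≤ (ENNReal.ofReal ((1 + (m : ℝ)⁻¹) ^ 𝒞.card)).toReal :=
          ENNReal.toReal_mono ENNReal.ofReal_ne_top hAbound
      _ = (1 + (m : ℝ)⁻¹) ^ 𝒞.card := ENNReal.toReal_ofReal (by positivity)
  -- compute ∫ g dP as a sum of marginal integrals of truncated llr
  have hints : ∀ S : Finset (Fin n), Integrable
      (fun x : ∀ i, X i => (r : ℝ)⁻¹ * Real.log ((u S (fun i : S => x i.1)).toReal)) P := by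
    intro S
    refine Integrable.mono' (integrable_const ((r : ℝ)⁻¹ * Real.log m))
      (measurable_const.mul
        (Real.measurable_log.comp ((hu_meas S).ennreal_toReal.comp (hπ S)))).aestronglyMeasurable
      (ae_of_all _ fun x => ?_)
    rw [norm_eq_abs, abs_mul, abs_of_nonneg hrinv0.le]
    exact mul_le_mul_of_nonneg_left (hlog_le S _) hrinv0.le
  have hsum : ∫ x, g x ∂P = ∑ S ∈ 𝒞, (r : ℝ)⁻¹ *
      ∫ z, Real.log ((u S z).toReal) ∂(P.map fun x (i : S) => x i.1) := by
    rw [hg, integral_finset_sum 𝒞 (fun S _ => hints S)]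
    refine Finset.sum_congr rfl fun S _ => ?_
    rw [integral_const_mul, integral_map (hπ S).aemeasurable
      (show AEStronglyMeasurable (fun z => Real.log ((u S z).toReal))
          (P.map fun x (i : S) => x i.1) from
        (Real.measurable_log.comp (hu_meas S).ennreal_toReal).aestronglyMeasurable)]
  have htrunc : ∀ S : Finset (Fin n),
      ∫ z, Real.log ((u S z).toReal) ∂(P.map fun x (i : S) => x i.1)
      = ∫ z, max (min (llr (P.map fun x (i : S) => x i.1)
          ((Measure.pi Q).map fun x (i : S) => x i.1) z) (Real.log m)) (- Real.log m)
          ∂(P.map fun x (i : S) => x i.1) := by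
    intro S
    haveI := hPSprob S; haveI := hQSprob S
    refine integral_congr_ae ?_
    filter_upwards [rn_facts _ _ (hacS S)] with z hz
    obtain ⟨h0, htop⟩ := hz
    have h1 : (u S z).toReal = max (min ((ρ S z).toReal) (m : ℝ)) ((m : ℝ))⁻¹ := by
      rw [hu]
      dsimp only
      rw [ENNReal.toReal_sup (((inf_le_right).trans_lt hmET.lt_top).ne) (by simp [hmE0]),
        ENNReal.toReal_inf htop.ne hmET, ENNReal.toReal_inv]
      simp [hρ]
    rw [h1, log_clamp (ENNReal.toReal_pos h0.ne' htop.ne) hm0]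
    rfl
  -- put everything together
  have hfinal := hgibbs
  rw [hsum] at hfinal
  have hsum2 : ∑ S ∈ 𝒞, (r : ℝ)⁻¹ *
      ∫ z, Real.log ((u S z).toReal) ∂(P.map fun x (i : S) => x i.1)
      = (r : ℝ)⁻¹ * ∑ S ∈ 𝒞, ∫ z, max (min (llr (P.map fun x (i : S) => x i.1)
          ((Measure.pi Q).map fun x (i : S) => x i.1) z) (Real.log m)) (- Real.log m)
          ∂(P.map fun x (i : S) => x i.1) := by
    rw [Finset.mul_sum]
    exact Finset.sum_congr rfl fun S _ => by rw [htrunc S]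
  rw [hsum2] at hfinal
  have hrpos : (0:ℝ) < r := by exact_mod_cast hr0
  set Sm := ∑ S ∈ 𝒞, ∫ z, max (min (llr (P.map fun x (i : S) => x i.1)
      ((Measure.pi Q).map fun x (i : S) => x i.1) z) (Real.log m)) (- Real.log m)
      ∂(P.map fun x (i : S) => x i.1) with hSm
  have h2 : (r : ℝ)⁻¹ * Sm ≤ (∫ x, llr P (Measure.pi Q) x ∂P) + ((1 + (m : ℝ)⁻¹) ^ 𝒞.card - 1) := by
    refine hfinal.trans ?_
    have := hAreal
    linarith
  calc Sm = r * ((r : ℝ)⁻¹ * Sm) := by field_simp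
    _ ≤ r * ((∫ x, llr P (Measure.pi Q) x ∂P) + ((1 + (m : ℝ)⁻¹) ^ 𝒞.card - 1)) :=
        mul_le_mul_of_nonneg_left h2 hrpos.le
    _ = _ := by ring
private lemma tr_bound {y L : ℝ} (hL : 0 ≤ L) : |max (min y L) (-L)| ≤ L := by
  rw [abs_le]
  exact ⟨le_max_right _ _, max_le (min_le_right _ _) (neg_le_self hL)⟩

private lemma minpos_bound {y L : ℝ} (hL : 0 ≤ L) : |min (max y 0) L| ≤ L := by
  rw [abs_le]
  constructor
  · calc -L ≤ 0 := by linarith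
      _ ≤ min (max y 0) L := le_min (le_max_right _ _) hL
  · exact min_le_right _ _

set_option maxHeartbeats 1000000 in
private lemma shearer_main {n : ℕ} {X : Fin n → Type*} [∀ i, MeasurableSpace (X i)]
    (P : Measure (∀ i, X i)) [IsProbabilityMeasure P]
    (Q : ∀ i, Measure (X i)) [∀ i, IsProbabilityMeasure (Q i)]
    (𝒞 : Finset (Finset (Fin n))) {r : ℕ} (hr0 : 0 < r)
    (hrcov : ∀ i : Fin n, (𝒞.filter fun S => i ∈ S).card ≤ r)
    (hac : P ≪ Measure.pi Q) (hint : Integrable (llr P (Measure.pi Q)) P) :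
    ∑ S ∈ 𝒞,
        relEntropy (P.map fun x (i : S) => x i.1)
          ((Measure.pi Q).map fun x (i : S) => x i.1) ≤
      (r : ℝ≥0∞) * relEntropy P (Measure.pi Q) := by
  classical
  have hπ : ∀ S : Finset (Fin n),
      Measurable (fun (x : ∀ i, X i) (i : S) => x i.1) := fun S =>
    measurable_pi_lambda _ fun i => measurable_pi_apply i.1
  have hPSprob : ∀ S : Finset (Fin n),
      IsProbabilityMeasure (P.map fun x (i : S) => x i.1) :=
    fun S => Measure.isProbabilityMeasure_map (hπ S).aemeasurable
  have hQSprob : ∀ S : Finset (Fin n),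
      IsProbabilityMeasure ((Measure.pi Q).map fun x (i : S) => x i.1) :=
    fun S => Measure.isProbabilityMeasure_map (hπ S).aemeasurable
  have hacS : ∀ S : Finset (Fin n),
      (P.map fun x (i : S) => x i.1) ≪ ((Measure.pi Q).map fun x (i : S) => x i.1) :=
    fun S => hac.map (hπ S)
  set D := ∫ x, llr P (Measure.pi Q) x ∂P with hD
  set c := 𝒞.card with hc
  have hllrm : ∀ S : Finset (Fin n), Measurable (llr (P.map fun x (i : S) => x i.1)
      ((Measure.pi Q).map fun x (i : S) => x i.1)) := fun S => measurable_llr _ _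
  -- the negative parts
  have hNS : ∀ S : Finset (Fin n),
      Integrable (fun z => max (- llr (P.map fun x (i : S) => x i.1)
        ((Measure.pi Q).map fun x (i : S) => x i.1) z) 0) (P.map fun x (i : S) => x i.1) ∧
      ∫ z, max (- llr (P.map fun x (i : S) => x i.1)
        ((Measure.pi Q).map fun x (i : S) => x i.1) z) 0
        ∂(P.map fun x (i : S) => x i.1) ≤ 1 := by
    intro S
    haveI := hPSprob S; haveI := hQSprob S
    exact llr_negpart _ _ (hacS S)
  set NS : Finset (Fin n) → ℝ := fun S => ∫ z, max (- llr (P.map fun x (i : S) => x i.1)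
      ((Measure.pi Q).map fun x (i : S) => x i.1) z) 0 ∂(P.map fun x (i : S) => x i.1)
    with hNSdef
  have hNS0 : ∀ S, 0 ≤ NS S := fun S => integral_nonneg fun z => le_max_right _ _
  -- truncations are integrable
  have hlogm : ∀ m : ℕ, 2 ≤ m → (0:ℝ) ≤ Real.log m := fun m hm =>
    Real.log_nonneg (by exact_mod_cast Nat.one_le_of_lt hm)
  have htr_int : ∀ (S : Finset (Fin n)) (m : ℕ), 2 ≤ m →
      Integrable (fun z => max (min (llr (P.map fun x (i : S) => x i.1)
        ((Measure.pi Q).map fun x (i : S) => x i.1) z) (Real.log m)) (- Real.log m))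
        (P.map fun x (i : S) => x i.1) := by
    intro S m hm
    haveI := hPSprob S
    refine Integrable.mono' (integrable_const (Real.log m))
      (((hllrm S).min measurable_const).max measurable_const).aestronglyMeasurable
      (ae_of_all _ fun z => ?_)
    exact tr_bound (hlogm m hm)
  -- lower bound on truncated integrals
  have htr_lb : ∀ (S : Finset (Fin n)) (m : ℕ), 2 ≤ m →
      - NS S ≤ ∫ z, max (min (llr (P.map fun x (i : S) => x i.1)
        ((Measure.pi Q).map fun x (i : S) => x i.1) z) (Real.log m)) (- Real.log m)
        ∂(P.map fun x (i : S) => x i.1) := by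
    intro S m hm
    rw [hNSdef, ← integral_neg]
    exact integral_mono ((hNS S).1.neg) (htr_int S m hm) fun z => tr_ge (hlogm m hm)
  -- uniform bound on the key estimate's right side
  have hkey := shearer_key P Q 𝒞 hr0 hrcov hac hint
  have hkeyB : ∀ m : ℕ, 2 ≤ m →
      ∑ S ∈ 𝒞, ∫ z, max (min (llr (P.map fun x (i : S) => x i.1)
        ((Measure.pi Q).map fun x (i : S) => x i.1) z) (Real.log m)) (- Real.log m)
        ∂(P.map fun x (i : S) => x i.1) ≤ r * D + r * 2 ^ c := by
    intro m hm
    refine (hkey m hm).trans ?_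
    have h1 : (1 + (m:ℝ)⁻¹) ^ c ≤ 2 ^ c := by
      refine pow_le_pow_left₀ (by positivity) ?_ c
      have : (m:ℝ)⁻¹ ≤ 1 := by
        rw [inv_le_one_iff₀]
        right
        exact_mod_cast Nat.one_le_of_lt hm
      linarith
    have hr0' : (0:ℝ) ≤ r := by positivity
    nlinarith [pow_nonneg (by norm_num : (0:ℝ) ≤ 2) c]
  -- integrability of each marginal llr
  set K : ℝ := r * D + r * 2 ^ c + (∑ S ∈ 𝒞, NS S) + 1 with hK
  have hposbound : ∀ S₀ ∈ 𝒞, ∀ m : ℕ, 2 ≤ m →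
      ∫ z, min (max (llr (P.map fun x (i : S₀) => x i.1)
        ((Measure.pi Q).map fun x (i : S₀) => x i.1) z) 0) (Real.log m)
        ∂(P.map fun x (i : S₀) => x i.1) ≤ K := by
    intro S₀ hS₀ m hm
    haveI := hPSprob S₀
    have hsplit : ∫ z, max (min (llr (P.map fun x (i : S₀) => x i.1)
        ((Measure.pi Q).map fun x (i : S₀) => x i.1) z) (Real.log m)) (- Real.log m)
        ∂(P.map fun x (i : S₀) => x i.1) ≤ r * D + r * 2 ^ c + ∑ S ∈ 𝒞.erase S₀, NS S := by
      have h1 := hkeyB m hm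
      rw [← Finset.add_sum_erase 𝒞 _ hS₀] at h1
      have h2 : - ∑ S ∈ 𝒞.erase S₀, NS S ≤ ∑ S ∈ 𝒞.erase S₀,
          ∫ z, max (min (llr (P.map fun x (i : S) => x i.1)
            ((Measure.pi Q).map fun x (i : S) => x i.1) z) (Real.log m)) (- Real.log m)
            ∂(P.map fun x (i : S) => x i.1) := by
        rw [← Finset.sum_neg_distrib]
        exact Finset.sum_le_sum fun S hS => htr_lb S m hm
      linarith
    have hup : ∫ z, min (max (llr (P.map fun x (i : S₀) => x i.1)
        ((Measure.pi Q).map fun x (i : S₀) => x i.1) z) 0) (Real.log m)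
        ∂(P.map fun x (i : S₀) => x i.1) ≤
        (∫ z, max (min (llr (P.map fun x (i : S₀) => x i.1)
          ((Measure.pi Q).map fun x (i : S₀) => x i.1) z) (Real.log m)) (- Real.log m)
          ∂(P.map fun x (i : S₀) => x i.1)) + NS S₀ := by
      rw [hNSdef, ← integral_add (htr_int S₀ m hm) (hNS S₀).1]
      refine integral_mono ?_ ((htr_int S₀ m hm).add (hNS S₀).1) fun z => tr_pos_le (hlogm m hm)
      refine Integrable.mono' (integrable_const (Real.log m))
        (((hllrm S₀).max measurable_const).min measurable_const).aestronglyMeasurable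
        (ae_of_all _ fun z => minpos_bound (hlogm m hm))
    have hNSsum : NS S₀ + ∑ S ∈ 𝒞.erase S₀, NS S = ∑ S ∈ 𝒞, NS S :=
      Finset.add_sum_erase 𝒞 _ hS₀
    rw [hK]
    linarith [(hNS S₀).2]
  have hllr_int : ∀ S₀ ∈ 𝒞, Integrable (llr (P.map fun x (i : S₀) => x i.1)
      ((Measure.pi Q).map fun x (i : S₀) => x i.1)) (P.map fun x (i : S₀) => x i.1) := by
    intro S₀ hS₀
    haveI := hPSprob S₀
    set f := llr (P.map fun x (i : S₀) => x i.1)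
      ((Measure.pi Q).map fun x (i : S₀) => x i.1) with hf
    -- MCT for the positive part
    have hlin : ∫⁻ z, ENNReal.ofReal (max (f z) 0) ∂(P.map fun x (i : S₀) => x i.1)
        ≤ ENNReal.ofReal K := by
      have hmono : Monotone (fun k : ℕ => fun z =>
          ENNReal.ofReal (min (max (f z) 0) (Real.log ((k+2 : ℕ))))) := by
        refine monotone_nat_of_le_succ fun k z => ?_
        refine ENNReal.ofReal_le_ofReal (min_le_min le_rfl ?_)
        refine Real.log_le_log (by positivity) ?_
        exact_mod_cast Nat.le_succ (k+2)
      have hsupz : ∀ z, (⨆ k : ℕ, ENNReal.ofReal (min (max (f z) 0) (Real.log ((k+2 : ℕ)))))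
          = ENNReal.ofReal (max (f z) 0) := by
        intro z
        refine le_antisymm (iSup_le fun k => ENNReal.ofReal_le_ofReal (min_le_left _ _)) ?_
        obtain ⟨k, hk⟩ := exists_nat_ge (Real.exp (max (f z) 0))
        have hle : max (f z) 0 ≤ Real.log ((k+2 : ℕ)) := by
          rw [← Real.log_exp (max (f z) 0)]
          refine Real.log_le_log (Real.exp_pos _) (hk.trans ?_)
          push_cast
          linarith
        calc ENNReal.ofReal (max (f z) 0)
            = ENNReal.ofReal (min (max (f z) 0) (Real.log ((k+2 : ℕ)))) := by rw [min_eq_left hle]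
          _ ≤ _ := le_iSup (fun k : ℕ => ENNReal.ofReal (min (max (f z) 0) (Real.log ((k+2 : ℕ))))) k
      calc ∫⁻ z, ENNReal.ofReal (max (f z) 0) ∂(P.map fun x (i : S₀) => x i.1)
          = ∫⁻ z, ⨆ k : ℕ, ENNReal.ofReal (min (max (f z) 0) (Real.log ((k+2 : ℕ))))
            ∂(P.map fun x (i : S₀) => x i.1) := by
            exact lintegral_congr fun z => (hsupz z).symm
        _ = ⨆ k : ℕ, ∫⁻ z, ENNReal.ofReal (min (max (f z) 0) (Real.log ((k+2 : ℕ))))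
            ∂(P.map fun x (i : S₀) => x i.1) := by
            refine lintegral_iSup (fun k => ?_) hmono
            exact (((hllrm S₀).max measurable_const).min measurable_const).ennreal_ofReal
        _ ≤ ENNReal.ofReal K := by
            refine iSup_le fun k => ?_
            have hintk : Integrable (fun z => min (max (f z) 0) (Real.log ((k+2 : ℕ))))
                (P.map fun x (i : S₀) => x i.1) := by
              refine Integrable.mono' (integrable_const (Real.log ((k+2 : ℕ))))
                (((hllrm S₀).max measurable_const).min measurable_const).aestronglyMeasurable
                (ae_of_all _ fun z => minpos_bound (hlogm (k+2) (by omega)))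
            rw [← ofReal_integral_eq_lintegral_ofReal hintk
              (ae_of_all _ fun z => le_min (le_max_right _ _) (hlogm (k+2) (by omega)))]
            exact ENNReal.ofReal_le_ofReal (hposbound S₀ hS₀ (k+2) (by omega))
    have hpos_int : Integrable (fun z => max (f z) 0) (P.map fun x (i : S₀) => x i.1) := by
      have hnn : (0 : (∀ i : S₀, X i.1) → ℝ) ≤ᵐ[P.map fun x (i : S₀) => x i.1]
          (fun z => max (f z) 0) := ae_of_all _ fun z => le_max_right _ _
      refine ⟨((hllrm S₀).max measurable_const).aestronglyMeasurable, ?_⟩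
      rw [hasFiniteIntegral_iff_ofReal hnn]
      exact hlin.trans_lt ENNReal.ofReal_lt_top
    exact (hpos_int.sub (hNS S₀).1).congr (ae_of_all _ fun z => pos_sub_neg (f z))
  -- nonnegativity of marginal entropies
  have hDS0 : ∀ S ∈ 𝒞, 0 ≤ ∫ z, llr (P.map fun x (i : S) => x i.1)
      ((Measure.pi Q).map fun x (i : S) => x i.1) z ∂(P.map fun x (i : S) => x i.1) := by
    intro S hS
    haveI := hPSprob S; haveI := hQSprob S
    exact integral_llr_nonneg' _ _ (hacS S) (hllr_int S hS)
  -- pass to the limit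
  have hfinal : ∑ S ∈ 𝒞, ∫ z, llr (P.map fun x (i : S) => x i.1)
      ((Measure.pi Q).map fun x (i : S) => x i.1) z ∂(P.map fun x (i : S) => x i.1)
      ≤ r * D := by
    have hL : Filter.Tendsto (fun k : ℕ => ∑ S ∈ 𝒞,
        ∫ z, max (min (llr (P.map fun x (i : S) => x i.1)
          ((Measure.pi Q).map fun x (i : S) => x i.1) z) (Real.log ((k+2 : ℕ)))) (- Real.log ((k+2 : ℕ)))
          ∂(P.map fun x (i : S) => x i.1)) Filter.atTop
        (nhds (∑ S ∈ 𝒞, ∫ z, llr (P.map fun x (i : S) => x i.1)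
          ((Measure.pi Q).map fun x (i : S) => x i.1) z ∂(P.map fun x (i : S) => x i.1))) := by
      refine tendsto_finset_sum 𝒞 fun S hS => ?_
      haveI := hPSprob S
      refine tendsto_integral_of_dominated_convergence
        (fun z => |llr (P.map fun x (i : S) => x i.1)
          ((Measure.pi Q).map fun x (i : S) => x i.1) z|)
        (fun k => (((hllrm S).min measurable_const).max measurable_const).aestronglyMeasurable)
        ((hllr_int S hS).abs) (fun k => ae_of_all _ fun z => ?_) (ae_of_all _ fun z => ?_)
      · rw [norm_eq_abs]
        exact tr_abs_le (hlogm (k+2) (by omega))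
      · set y := llr (P.map fun x (i : S) => x i.1)
          ((Measure.pi Q).map fun x (i : S) => x i.1) z with hy
        obtain ⟨k₀, hk₀⟩ := exists_nat_ge (Real.exp |y|)
        refine Filter.Tendsto.congr' ?_ tendsto_const_nhds
        rw [Filter.EventuallyEq, Filter.eventually_atTop]
        refine ⟨k₀, fun k hk => ?_⟩
        refine (tr_eq_of ?_).symm
        rw [← Real.log_exp |y|]
        refine Real.log_le_log (Real.exp_pos _) (hk₀.trans ?_)
        push_cast
        have : (k₀ : ℝ) ≤ k := by exact_mod_cast hk
        linarith
    have hR : Filter.Tendsto (fun k : ℕ => r * D + r * ((1 + (((k+2 : ℕ) : ℝ))⁻¹) ^ c - 1))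
        Filter.atTop (nhds (r * D)) := by
      simp only [show ∀ k : ℕ, (((k+2 : ℕ) : ℝ)) = (k:ℝ)+2 from fun k => by push_cast; ring]
      have h1 : Filter.Tendsto (fun k : ℕ => ((k:ℝ)+2)⁻¹) Filter.atTop (nhds 0) := by
        refine Filter.Tendsto.comp tendsto_inv_atTop_zero ?_
        refine Filter.tendsto_atTop_add_const_right _ 2 tendsto_natCast_atTop_atTop
      have h2 : Filter.Tendsto (fun k : ℕ => r * D + r * ((1 + ((k:ℝ)+2)⁻¹) ^ c - 1))
          Filter.atTop (nhds (r * D + r * ((1 + 0) ^ c - 1))) := by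
        refine Filter.Tendsto.const_add _ (Filter.Tendsto.const_mul _ ?_)
        refine Filter.Tendsto.sub_const ?_ 1
        exact (Filter.Tendsto.const_add 1 h1).pow c
      simpa using h2
    exact le_of_tendsto_of_tendsto' hL hR fun k => hkey (k+2) (by omega)
  -- conclude
  rw [relEntropy, if_pos ⟨hac, hint⟩]
  have hstep : ∑ S ∈ 𝒞,
      relEntropy (P.map fun x (i : S) => x i.1)
        ((Measure.pi Q).map fun x (i : S) => x i.1)
      = ∑ S ∈ 𝒞, ENNReal.ofReal (∫ z, llr (P.map fun x (i : S) => x i.1)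
        ((Measure.pi Q).map fun x (i : S) => x i.1) z ∂(P.map fun x (i : S) => x i.1)) := by
    refine Finset.sum_congr rfl fun S hS => ?_
    rw [relEntropy, if_pos ⟨hacS S, hllr_int S hS⟩]
  rw [hstep, ← ENNReal.ofReal_sum_of_nonneg hDS0]
  calc ENNReal.ofReal (∑ S ∈ 𝒞, ∫ z, llr (P.map fun x (i : S) => x i.1)
        ((Measure.pi Q).map fun x (i : S) => x i.1) z ∂(P.map fun x (i : S) => x i.1))
      ≤ ENNReal.ofReal (r * D) := ENNReal.ofReal_le_ofReal hfinal
    _ = (r : ℝ≥0∞) * ENNReal.ofReal D := by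
        rw [ENNReal.ofReal_mul (by positivity), ENNReal.ofReal_natCast]
private lemma relEntropy_self_of_subsingleton {α : Type*} [MeasurableSpace α] [Subsingleton α]
    (μ ν : Measure α) [IsProbabilityMeasure μ] [IsProbabilityMeasure ν] :
    relEntropy μ ν = 0 := by
  have hμν : μ = ν := by
    ext s hs
    rcases Set.eq_empty_or_nonempty s with rfl | ⟨a, ha⟩
    · simp
    · have : s = Set.univ := Set.eq_univ_of_forall fun b => Subsingleton.elim a b ▸ ha
      rw [this, measure_univ, measure_univ]
  subst hμν
  have h1 : llr μ μ =ᵐ[μ] 0 := by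
    filter_upwards [Measure.rnDeriv_self μ] with x hx
    simp [llr, hx]
  have h2 : Integrable (llr μ μ) μ := by
    rw [integrable_congr h1]
    exact integrable_zero _ _ _
  rw [relEntropy, if_pos ⟨Measure.AbsolutelyContinuous.rfl, h2⟩, integral_congr_ae h1]
  simp

end ShearerAux

open Finset Real in
/-- **Shearer's lemma for relative entropy.** Let `P, Q` be Borel probability measures on a
finite product `X = ∏ i, X i` of separable complete metric spaces, with `Q = ∏ i, Q i` of
product form. For any collection `𝒞` of distinct subsets of `{1,…,n}`, with
`r := max_i #{S ∈ 𝒞 : i ∈ S}`, the marginals satisfy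
`∑_{S ∈ 𝒞} D(P_S ‖ Q_S) ≤ r · D(P ‖ Q)`. -/
theorem relEntropy_shearer {n : ℕ} {X : Fin n → Type*}
    [∀ i, MeasurableSpace (X i)] [∀ i, MetricSpace (X i)] [∀ i, CompleteSpace (X i)]
    [∀ i, TopologicalSpace.SeparableSpace (X i)] [∀ i, BorelSpace (X i)]
    (P : Measure (∀ i, X i)) [IsProbabilityMeasure P]
    (Q : ∀ i, Measure (X i)) [∀ i, IsProbabilityMeasure (Q i)]
    (𝒞 : Finset (Finset (Fin n))) (r : ℕ)
    (hr : r = ⨆ i : Fin n, (𝒞.filter fun S => i ∈ S).card) :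
    ∑ S ∈ 𝒞,
        relEntropy (P.map fun x (i : S) => x i.1)
          ((Measure.pi Q).map fun x (i : S) => x i.1) ≤
      (r : ℝ≥0∞) * relEntropy P (Measure.pi Q) := by
  classical
  have hπ : ∀ S : Finset (Fin n),
      Measurable (fun (x : ∀ i, X i) (i : S) => x i.1) := fun S =>
    measurable_pi_lambda _ fun i => measurable_pi_apply i.1
  have hrcov : ∀ i : Fin n, (𝒞.filter fun S => i ∈ S).card ≤ r := by
    intro i
    rw [hr]
    exact le_ciSup (f := fun i : Fin n => (𝒞.filter fun S => i ∈ S).card) ((Set.finite_range _).bddAbove) i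
  rcases Nat.eq_zero_or_pos r with hr0 | hr0
  · -- r = 0 : every S ∈ 𝒞 is empty
    subst hr0
    have hempty : ∀ S ∈ 𝒞, S = ∅ := by
      intro S hS
      by_contra h
      obtain ⟨i, hi⟩ := Finset.nonempty_iff_ne_empty.2 h
      have h1 : 0 < (𝒞.filter fun S => i ∈ S).card :=
        Finset.card_pos.2 ⟨S, Finset.mem_filter.2 ⟨hS, hi⟩⟩
      exact absurd (hrcov i) (by omega)
    have : ∑ S ∈ 𝒞,
        relEntropy (P.map fun x (i : S) => x i.1)
          ((Measure.pi Q).map fun x (i : S) => x i.1) = 0 := by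
      refine Finset.sum_eq_zero fun S hS => ?_
      have hSe := hempty S hS
      subst hSe
      haveI : Subsingleton (∀ i : (∅ : Finset (Fin n)), X i.1) :=
        ⟨fun a b => funext fun i => (Finset.notMem_empty _ i.2).elim⟩
      haveI : IsProbabilityMeasure (P.map fun x (i : (∅ : Finset (Fin n))) => x i.1) :=
        Measure.isProbabilityMeasure_map (hπ ∅).aemeasurable
      haveI : IsProbabilityMeasure
          ((Measure.pi Q).map fun x (i : (∅ : Finset (Fin n))) => x i.1) :=
        Measure.isProbabilityMeasure_map (hπ ∅).aemeasurable
      exact relEntropy_self_of_subsingleton _ _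
    rw [this]
    exact zero_le
  by_cases hmain : P ≪ Measure.pi Q ∧ Integrable (llr P (Measure.pi Q)) P
  swap
  · rw [relEntropy, if_neg hmain, ENNReal.mul_top (by exact_mod_cast hr0.ne')]
    exact le_top
  obtain ⟨hac, hint⟩ := hmain
  exact shearer_main P Q 𝒞 hr0 hrcov hac hint
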